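/- Let n ≥ 1 and let α = (α₁,…,α_n) and β = (β₁,…,β_n) be vectors of natural numbers with Σᵢ αᵢ = Σᵢ βᵢ = d. Then in ℚ[x₁,…,x_n, y₁,…,y_n] the polynomial P_{α,β} = ∏_{i=1}^n x_i^{αᵢ} y_i^{βᵢ} + ∏_{i=1}^n x_i^{βᵢ} y_i^{αᵢ} lies in the subring (with integer coefficients) generated by the elements τ_{i,j} = −(x_i−x_j)(y_i−y_j)/2 for 1 ≤ i < j ≤ n together with the elements τ_{i,n+1} = −x_i y_i/2 for 1 ≤ i ≤ n. -/

import Mathlib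

open MvPolynomial Finset

/-- The variable `xᵢ` in the polynomial ring `ℚ[x₁,…, y₁,…]`, indexed from `0`. -/
noncomputable def xVar (i : ℕ) : MvPolynomial (ℕ ⊕ ℕ) ℚ := X (Sum.inl i)

/-- The variable `yᵢ` in the polynomial ring `ℚ[x₁,…, y₁,…]`, indexed from `0`. -/
noncomputable def yVar (i : ℕ) : MvPolynomial (ℕ ⊕ ℕ) ℚ := X (Sum.inr i)

noncomputable def sPol (i j : ℕ) : MvPolynomial (ℕ ⊕ ℕ) ℚ :=
  xVar i * yVar j + xVar j * yVar i

noncomputable def aPol (i j : ℕ) : MvPolynomial (ℕ ⊕ ℕ) ℚ :=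
  xVar i * yVar j - xVar j * yVar i

noncomputable def prodA (L : List (ℕ × ℕ)) : MvPolynomial (ℕ ⊕ ℕ) ℚ :=
  (L.map fun p => xVar p.1 * yVar p.2).prod

noncomputable def prodB (L : List (ℕ × ℕ)) : MvPolynomial (ℕ ⊕ ℕ) ℚ :=
  (L.map fun p => xVar p.2 * yVar p.1).prod

lemma prodA_cons (i j : ℕ) (L : List (ℕ × ℕ)) :
    prodA ((i, j) :: L) = xVar i * yVar j * prodA L := by
  simp [prodA]

lemma prodB_cons (i j : ℕ) (L : List (ℕ × ℕ)) :
    prodB ((i, j) :: L) = xVar j * yVar i * prodB L := by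
  simp [prodB]

lemma twoNeZero : (2 : MvPolynomial (ℕ ⊕ ℕ) ℚ) ≠ 0 := by norm_num

lemma twoMem (R : Subring (MvPolynomial (ℕ ⊕ ℕ) ℚ)) : (2 : MvPolynomial (ℕ ⊕ ℕ) ℚ) ∈ R := by
  rw [show (2 : MvPolynomial (ℕ ⊕ ℕ) ℚ) = 1 + 1 by norm_num]
  exact R.add_mem R.one_mem R.one_mem

/-- The key induction. -/
lemma key (n : ℕ) (R : Subring (MvPolynomial (ℕ ⊕ ℕ) ℚ))
    (hs : ∀ i j, i < n → j < n → ∃ r ∈ R, sPol i j = 2 * r) :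
    ∀ L : List (ℕ × ℕ), (∀ p ∈ L, p.1 < n ∧ p.2 < n) →
      (prodA L + prodB L ∈ R ∧
        ∀ k l, k < n → l < n → ∃ r ∈ R, aPol k l * (prodA L - prodB L) = 2 * r) := by
  intro L
  induction L with
  | nil =>
      intro _
      constructor
      · have h : prodA ([] : List (ℕ × ℕ)) + prodB [] = 2 := by
          simp [prodA, prodB]; ring
        rw [h]
        exact twoMem R
      · intro k l _ _
        exact ⟨0, R.zero_mem, by simp [prodA, prodB]⟩
  | cons p L ih =>
      intro hmem
      obtain ⟨i, j⟩ := p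
      have hij : i < n ∧ j < n := hmem (i, j) List.mem_cons_self
      have hi := hij.1
      have hj := hij.2
      have hL : ∀ q ∈ L, q.1 < n ∧ q.2 < n := fun q hq => hmem q (List.mem_cons_of_mem _ hq)
      obtain ⟨hPA, hD⟩ := ih hL
      obtain ⟨σ, hσR, hσ⟩ := hs i j hi hj
      obtain ⟨t, htR, ht⟩ := hD i j hi hj
      simp only [sPol, aPol] at hσ ht
      have hcons : prodA ((i, j) :: L) + prodB ((i, j) :: L)
          = σ * (prodA L + prodB L) + t := by
        apply mul_left_cancel₀ twoNeZero
        rw [prodA_cons, prodB_cons]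
        linear_combination (prodA L + prodB L) * hσ + ht
      constructor
      · rw [hcons]
        exact R.add_mem (R.mul_mem hσR hPA) htR
      · intro k l hk hl
        obtain ⟨t', ht'R, ht'⟩ := hD k l hk hl
        obtain ⟨σkj, hσkjR, hσkj⟩ := hs k j hk hj
        obtain ⟨σli, hσliR, hσli⟩ := hs l i hl hi
        obtain ⟨σki, hσkiR, hσki⟩ := hs k i hk hi
        obtain ⟨σlj, hσljR, hσlj⟩ := hs l j hl hj
        simp only [sPol, aPol] at ht' hσkj hσli hσki hσlj
        refine ⟨σ * t' + (σkj * σli - σki * σlj) * (prodA L + prodB L), ?_, ?_⟩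
        · refine R.add_mem (R.mul_mem hσR ht'R) ?_
          exact R.mul_mem
            (R.sub_mem (R.mul_mem hσkjR hσliR) (R.mul_mem hσkiR hσljR)) hPA
        · apply mul_left_cancel₀ twoNeZero
          rw [prodA_cons, prodB_cons]
          simp only [aPol]
          linear_combination
            ((xVar k * yVar l - xVar l * yVar k) * (prodA L - prodB L)) * hσ +
            2 * σ * ht' +
            (prodA L + prodB L) * (xVar l * yVar i + xVar i * yVar l) * hσkj +
            2 * σkj * (prodA L + prodB L) * hσli -
            (prodA L + prodB L) * (xVar l * yVar j + xVar j * yVar l) * hσki -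
            2 * σki * (prodA L + prodB L) * hσlj

noncomputable section

def idxList (n : ℕ) (g : ℕ → ℕ) : List ℕ :=
  (List.range n).flatMap (fun i => List.replicate (g i) i)

lemma idxList_length (n : ℕ) (g : ℕ → ℕ) :
    (idxList n g).length = ∑ i ∈ Finset.range n, g i := by
  induction n with
  | zero => simp [idxList]
  | succ m ih =>
      rw [idxList, List.range_succ, List.flatMap_append, List.length_append,
        Finset.sum_range_succ, ← idxList, ih]
      simp

lemma idxList_lt (n : ℕ) (g : ℕ → ℕ) {i : ℕ} (h : i ∈ idxList n g) : i < n := by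
  rw [idxList, List.mem_flatMap] at h
  obtain ⟨a, ha, hia⟩ := h
  rw [List.mem_replicate] at hia
  rw [hia.2]
  exact List.mem_range.mp ha

lemma idxList_map_prod (n : ℕ) (g : ℕ → ℕ) (f : ℕ → MvPolynomial (ℕ ⊕ ℕ) ℚ) :
    ((idxList n g).map f).prod = ∏ i ∈ Finset.range n, f i ^ g i := by
  induction n with
  | zero => simp [idxList]
  | succ m ih =>
      rw [idxList, List.range_succ, List.flatMap_append, List.map_append,
        List.prod_append, Finset.prod_range_succ, ← idxList, ih]
      simp [List.map_replicate, List.prod_replicate]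

end

lemma hC2 : (2 : MvPolynomial (ℕ ⊕ ℕ) ℚ) * C (-(1/2) : ℚ) = -1 := by
  rw [show (2 : MvPolynomial (ℕ ⊕ ℕ) ℚ) = C (2:ℚ) from (map_ofNat C 2).symm, ← map_mul]
  norm_num

lemma hs_closure (n : ℕ) :
    ∀ i j, i < n → j < n →
      ∃ r ∈ Subring.closure
        ({p : MvPolynomial (ℕ ⊕ ℕ) ℚ | ∃ i j : ℕ, i < j ∧ j < n ∧
            p = C (-(1 / 2) : ℚ) * ((xVar i - xVar j) * (yVar i - yVar j))} ∪
         {p : MvPolynomial (ℕ ⊕ ℕ) ℚ | ∃ i : ℕ, i < n ∧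
            p = C (-(1 / 2) : ℚ) * (xVar i * yVar i)}),
        sPol i j = 2 * r := by
  intro i j hi hj
  set R := Subring.closure
        ({p : MvPolynomial (ℕ ⊕ ℕ) ℚ | ∃ i j : ℕ, i < j ∧ j < n ∧
            p = C (-(1 / 2) : ℚ) * ((xVar i - xVar j) * (yVar i - yVar j))} ∪
         {p : MvPolynomial (ℕ ⊕ ℕ) ℚ | ∃ i : ℕ, i < n ∧
            p = C (-(1 / 2) : ℚ) * (xVar i * yVar i)}) with hR
  have hτ : ∀ k, k < n → C (-(1 / 2) : ℚ) * (xVar k * yVar k) ∈ R :=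
    fun k hk => Subring.subset_closure (Set.mem_union_right _ ⟨k, hk, rfl⟩)
  have hg : ∀ k l, k < l → l < n →
      C (-(1 / 2) : ℚ) * ((xVar k - xVar l) * (yVar k - yVar l)) ∈ R :=
    fun k l hkl hl => Subring.subset_closure (Set.mem_union_left _ ⟨k, l, hkl, hl, rfl⟩)
  rcases lt_trichotomy i j with h | h | h
  · refine ⟨C (-(1/2) : ℚ) * ((xVar i - xVar j) * (yVar i - yVar j))
      - C (-(1/2) : ℚ) * (xVar i * yVar i) - C (-(1/2) : ℚ) * (xVar j * yVar j),
      R.sub_mem (R.sub_mem (hg i j h hj) (hτ i hi)) (hτ j hj), ?_⟩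
    simp only [sPol]
    linear_combination (-((xVar i - xVar j) * (yVar i - yVar j))
      + xVar i * yVar i + xVar j * yVar j) * hC2
  · subst h
    refine ⟨(-2 : MvPolynomial (ℕ ⊕ ℕ) ℚ) * (C (-(1/2) : ℚ) * (xVar i * yVar i)),
      R.mul_mem (R.neg_mem (twoMem R)) (hτ i hi), ?_⟩
    simp only [sPol]
    linear_combination (2 * (xVar i * yVar i)) * hC2
  · refine ⟨C (-(1/2) : ℚ) * ((xVar j - xVar i) * (yVar j - yVar i))
      - C (-(1/2) : ℚ) * (xVar i * yVar i) - C (-(1/2) : ℚ) * (xVar j * yVar j),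
      R.sub_mem (R.sub_mem (hg j i h hi) (hτ i hi)) (hτ j hj), ?_⟩
    simp only [sPol]
    linear_combination (-((xVar j - xVar i) * (yVar j - yVar i))
      + xVar i * yVar i + xVar j * yVar j) * hC2

lemma prodA_zip : ∀ (A B : List ℕ), A.length = B.length →
    prodA (A.zip B) = (A.map xVar).prod * (B.map yVar).prod := by
  intro A
  induction A with
  | nil =>
      intro B h
      have : B = [] := List.length_eq_zero_iff.mp h.symm
      subst this
      simp [prodA]
  | cons a A' ih =>
      intro B h
      cases B with
      | nil => simp at h
      | cons b B' =>
          simp only [List.zip_cons_cons, List.map_cons, List.prod_cons]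
          rw [prodA_cons, ih B' (by simpa using h)]
          ring

lemma prodB_zip : ∀ (A B : List ℕ), A.length = B.length →
    prodB (A.zip B) = (B.map xVar).prod * (A.map yVar).prod := by
  intro A
  induction A with
  | nil =>
      intro B h
      have : B = [] := List.length_eq_zero_iff.mp h.symm
      subst this
      simp [prodB]
  | cons a A' ih =>
      intro B h
      cases B with
      | nil => simp at h
      | cons b B' =>
          simp only [List.zip_cons_cons, List.map_cons, List.prod_cons]
          rw [prodB_cons, ih B' (by simpa using h)]
          ring

/-- Lemma: `P_{α,β}` is an integer polynomial in the `τ`'s.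
With variables indexed `0,…,n-1`, if `Σ αᵢ = Σ βᵢ = d` then the polynomial
`P_{α,β} = ∏ xᵢ^{αᵢ} yᵢ^{βᵢ} + ∏ xᵢ^{βᵢ} yᵢ^{αᵢ}` lies in the subring generated by
the `τ_{i,j} = -(xᵢ-xⱼ)(yᵢ-yⱼ)/2` (for `i < j < n`) together with the
`τ_{i,n+1} = -xᵢyᵢ/2` (for `i < n`). -/
theorem statement1 (n : ℕ) (hn : 1 ≤ n) (d : ℕ) (α β : ℕ → ℕ)
    (hα : ∑ i ∈ Finset.range n, α i = d) (hβ : ∑ i ∈ Finset.range n, β i = d) :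
    (∏ i ∈ Finset.range n, xVar i ^ α i * yVar i ^ β i) +
      (∏ i ∈ Finset.range n, xVar i ^ β i * yVar i ^ α i) ∈
    Subring.closure
      ({p : MvPolynomial (ℕ ⊕ ℕ) ℚ | ∃ i j : ℕ, i < j ∧ j < n ∧
          p = C (-(1 / 2) : ℚ) * ((xVar i - xVar j) * (yVar i - yVar j))} ∪
       {p : MvPolynomial (ℕ ⊕ ℕ) ℚ | ∃ i : ℕ, i < n ∧
          p = C (-(1 / 2) : ℚ) * (xVar i * yVar i)}) := by
  set R := Subring.closure
      ({p : MvPolynomial (ℕ ⊕ ℕ) ℚ | ∃ i j : ℕ, i < j ∧ j < n ∧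
          p = C (-(1 / 2) : ℚ) * ((xVar i - xVar j) * (yVar i - yVar j))} ∪
       {p : MvPolynomial (ℕ ⊕ ℕ) ℚ | ∃ i : ℕ, i < n ∧
          p = C (-(1 / 2) : ℚ) * (xVar i * yVar i)}) with hRdef
  set A := idxList n α with hA
  set B := idxList n β with hB
  have hlen : A.length = B.length := by
    rw [hA, hB, idxList_length, idxList_length, hα, hβ]
  set L := A.zip B with hLdef
  have hmem : ∀ p ∈ L, p.1 < n ∧ p.2 < n := by
    intro p hp
    have := List.of_mem_zip (show (p.1, p.2) ∈ A.zip B from hp)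
    exact ⟨idxList_lt n α this.1, idxList_lt n β this.2⟩
  have hPA : prodA L = ∏ i ∈ Finset.range n, xVar i ^ α i * yVar i ^ β i := by
    rw [hLdef, prodA_zip A B hlen, hA, hB, idxList_map_prod, idxList_map_prod,
      Finset.prod_mul_distrib]
  have hPB : prodB L = ∏ i ∈ Finset.range n, xVar i ^ β i * yVar i ^ α i := by
    rw [hLdef, prodB_zip A B hlen, hA, hB, idxList_map_prod, idxList_map_prod,
      Finset.prod_mul_distrib]
  rw [← hPA, ← hPB]
  exact (key n R (hs_closure n) L hmem).1
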